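/- Let 𝔤 ⊆ E be a linear subspace, let Kp, Kd ∈ E, and let g₀ : ℝ → E be differentiable with g₀(t) invertible and g₀'(t) = g₀(t)·ξ₀(t) for some ξ₀ : ℝ → 𝔤. Let ξ̃ : ℝ → 𝔤, e∥ : ℝ → E and W : ℝ → E be differentiable functions, let A : ℝ → (𝔤 → 𝔤) be a family of linear maps, and suppose: (i) e∥'(t) = g₀(t)·ξ̃(t)·g₀(t)⁻¹ + W(t); (ii) ξ̃'(t) = A(t)·ξ̃(t) + v(t), where v(t) = ξ̃(t)·ξ₀(t) − ξ₀(t)·ξ̃(t) + Y(t) − A(t)·ξ̃(t) and Y(t) = g₀(t)⁻¹·(−W'(t) + Kp·e∥(t) + Kd·(g₀(t)·ξ̃(t)·g₀(t)⁻¹ + W(t)))·g₀(t). Then the function η(t) := g₀(t)·ξ̃(t)·g₀(t)⁻¹ + W(t) satisfies e∥'(t) = η(t) and η'(t) = Kp·e∥(t) + Kd·η(t) for all t. -/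

import Mathlib

open scoped Matrix

attribute [local instance] Matrix.frobeniusNormedAddCommGroup Matrix.frobeniusNormedSpace
attribute [local instance] Matrix.frobeniusNormedRing Matrix.frobeniusNormedAlgebra

/-- The closed-loop cascade identity in the proof of **Theorem 2**: under the PD-like
feedback, the function `η(t) = g₀(t) ξ̃(t) g₀(t)⁻¹ + W(t)` satisfies `e∥' = η` and
`η' = Kp e∥ + Kd η`. -/
theorem pd_feedback_cascade {n : ℕ}
    (𝔤 : Submodule ℝ (Matrix (Fin n) (Fin n) ℝ))
    (Kp Kd : Matrix (Fin n) (Fin n) ℝ)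
    (g₀ ξ₀ ξt epar W W' Y v : ℝ → Matrix (Fin n) (Fin n) ℝ)
    (A : ℝ → (Matrix (Fin n) (Fin n) ℝ →ₗ[ℝ] Matrix (Fin n) (Fin n) ℝ))
    (hg₀unit : ∀ t, IsUnit (g₀ t))
    (hg₀' : ∀ t, HasDerivAt g₀ (g₀ t * ξ₀ t) t)
    (hξ₀ : ∀ t, ξ₀ t ∈ 𝔤) (hξt : ∀ t, ξt t ∈ 𝔤)
    (hW' : ∀ t, HasDerivAt W (W' t) t)
    (hepar' : ∀ t, HasDerivAt epar (g₀ t * ξt t * (g₀ t)⁻¹ + W t) t)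
    (hY : ∀ t, Y t = (g₀ t)⁻¹ *
      (-(W' t) + Kp * epar t + Kd * (g₀ t * ξt t * (g₀ t)⁻¹ + W t)) * g₀ t)
    (hv : ∀ t, v t = ξt t * ξ₀ t - ξ₀ t * ξt t + Y t - A t (ξt t))
    (hξt' : ∀ t, HasDerivAt ξt (A t (ξt t) + v t) t) :
    ∀ t, HasDerivAt epar (g₀ t * ξt t * (g₀ t)⁻¹ + W t) t ∧
      HasDerivAt (fun s => g₀ s * ξt s * (g₀ s)⁻¹ + W s)
        (Kp * epar t + Kd * (g₀ t * ξt t * (g₀ t)⁻¹ + W t)) t := by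
  intro t
  refine ⟨hepar' t, ?_⟩
  have hdet : IsUnit (g₀ t).det := (Matrix.isUnit_iff_isUnit_det _).mp (hg₀unit t)
  -- derivative of the inverse
  have hinv : HasDerivAt (fun s => (g₀ s)⁻¹) (-(ξ₀ t * (g₀ t)⁻¹)) t := by
    have h1 : HasDerivAt (fun s => Ring.inverse (g₀ s))
        (-((g₀ t)⁻¹ * (g₀ t * ξ₀ t) * (g₀ t)⁻¹)) t := by
      have := (hasFDerivAt_ringInverse (𝕜 := ℝ) (hg₀unit t).unit).comp_hasDerivAt t (hg₀' t)
      simp [Matrix.coe_units_inv, Matrix.nonsing_inv_eq_ringInverse,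
        ContinuousLinearMap.mulLeftRight_apply] at this
      rw [Matrix.nonsing_inv_eq_ringInverse]
      exact this
    have heq : (fun s => (g₀ s)⁻¹) = fun s => Ring.inverse (g₀ s) := by
      ext s : 1; exact (Matrix.nonsing_inv_eq_ringInverse _)
    rw [heq]
    convert h1 using 1
    rw [← mul_assoc ((g₀ t)⁻¹), Matrix.nonsing_inv_mul _ hdet, one_mul]
  have hd := (((hg₀' t).mul (hξt' t)).mul hinv).add (hW' t)
  have h1 : g₀ t * (g₀ t)⁻¹ = 1 := Matrix.mul_nonsing_inv _ hdet
  have h1a : ∀ Z, g₀ t * ((g₀ t)⁻¹ * Z) = Z := fun Z => by rw [← mul_assoc, h1, one_mul]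
  convert hd using 1
  case e'_4 => rfl
  case e'_5 => rfl
  case e'_6 => rfl
  case e'_8 => rfl
  rw [hv t, hY t]
  simp only [mul_add, add_mul, mul_sub, sub_mul, mul_neg, neg_mul, mul_assoc, h1, h1a, mul_one, Pi.mul_apply]
  abel
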